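/- Let n ≥ 1 and let Σ ⊂ ℝ^{n+1} be a nonempty compact set with 0 < Hⁿ(Σ) < ∞, where Hⁿ is n-dimensional Hausdorff measure. Then for every fixed r > 0, the supremum over x₀ ∈ ℝ^{n+1} of the Gaussian F-functional F_{x₀,r}(Σ) is achieved at some point of the convex hull of Σ: there exists x₀ ∈ convexHull(Σ) with F_{x₀,r}(Σ) = sup_{y ∈ ℝ^{n+1}} F_{y,r}(Σ). -/

import Mathlib

open MeasureTheory Metric Set RealInnerProductSpace

/-- In a finite-dimensional real normed space, the convex hull of a compact set is compact. -/
lemma isCompact_convexHull_aux {E : Type} [NormedAddCommGroup E] [NormedSpace ℝ E]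
    [FiniteDimensional ℝ E] {S : Set E} (hS : IsCompact S) (hne : S.Nonempty) :
    IsCompact (convexHull ℝ S) := by
  classical
  obtain ⟨s₀, hs₀⟩ := hne
  set m := Module.finrank ℝ E + 1 with hm
  have himg : convexHull ℝ S =
      (fun p : (Fin m → ℝ) × (Fin m → E) => ∑ i, p.1 i • p.2 i) ''
        (stdSimplex ℝ (Fin m) ×ˢ Set.univ.pi fun _ => S) := by
    apply Set.Subset.antisymm
    · intro x hx
      obtain ⟨ι, hι, z, w, hzS, hai, hwpos, hwsum, hsum⟩ :=
        eq_pos_convex_span_of_mem_convexHull hx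
      have hcard : Fintype.card ι ≤ m := by
        have h1 := hai.card_le_finrank_succ
        have h2 := Submodule.finrank_le (vectorSpan ℝ (Set.range z))
        omega
      let e : ι ↪ Fin m :=
        (Fintype.equivFin ι).toEmbedding.trans ⟨Fin.castLE hcard, Fin.castLE_injective hcard⟩
      let w' : Fin m → ℝ := Function.extend e w 0
      let z' : Fin m → E := Function.extend e z (fun _ => s₀)
      have hw'e : ∀ j, w' (e j) = w j := fun j => e.injective.extend_apply _ _ _
      have hz'e : ∀ j, z' (e j) = z j := fun j => e.injective.extend_apply _ _ _
      have hw'0 : ∀ i, i ∉ Finset.univ.map e → w' i = 0 := by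
        intro i hi
        have : ¬ ∃ j, e j = i := by
          rintro ⟨j, rfl⟩; exact hi (Finset.mem_map_of_mem e (Finset.mem_univ j))
        simp [w', Function.extend_def, this]
      refine ⟨(w', z'), ⟨?_, ?_⟩, ?_⟩
      · constructor
        · intro i
          show 0 ≤ w' i
          by_cases hi : ∃ j, e j = i
          · obtain ⟨j, rfl⟩ := hi; rw [hw'e]; exact (hwpos j).le
          · have : i ∉ Finset.univ.map e := by
              intro hmem
              obtain ⟨j, _, rfl⟩ := Finset.mem_map.mp hmem
              exact hi ⟨j, rfl⟩
            rw [hw'0 i this]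
        · show ∑ i, w' i = 1
          rw [← Finset.sum_subset (Finset.subset_univ (Finset.univ.map e))
            (fun i _ hi => hw'0 i hi)]
          rw [Finset.sum_map]
          simpa [hw'e] using hwsum
      · intro i _
        show z' i ∈ S
        by_cases hi : ∃ j, e j = i
        · obtain ⟨j, rfl⟩ := hi
          rw [hz'e]
          exact hzS ⟨j, rfl⟩
        · simp only [z', Function.extend_def, hi, dif_neg, not_false_iff]
          exact hs₀
      · show ∑ i, w' i • z' i = x
        have : ∑ i, w' i • z' i = ∑ j, w j • z j := by
          rw [← Finset.sum_subset (Finset.subset_univ (Finset.univ.map e))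
            (fun i _ hi => by rw [hw'0 i hi, zero_smul])]
          rw [Finset.sum_map]
          simp [hw'e, hz'e]
        simpa [this] using hsum
    · rintro _ ⟨⟨w, z⟩, ⟨hw, hz⟩, rfl⟩
      exact (convex_convexHull ℝ S).sum_mem (fun i _ => hw.1 i) hw.2
        (fun i _ => subset_convexHull ℝ S (hz i (Set.mem_univ i)))
  rw [himg]
  exact ((isCompact_stdSimplex (𝕜 := ℝ) (ι := Fin m)).prod (isCompact_univ_pi fun _ => hS)).image
    (continuous_finset_sum _ fun i _ =>
      ((continuous_apply i).comp continuous_fst).smul ((continuous_apply i).comp continuous_snd))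

/-- The Gaussian F-functional `F_{x₀,r}(S) = (4πr)^{-n/2} ∫_S exp(-|x-x₀|²/(4r)) dHⁿ(x)`. -/
noncomputable def gaussianF (n : ℕ) (S : Set (EuclideanSpace ℝ (Fin (n+1))))
    (x₀ : EuclideanSpace ℝ (Fin (n+1))) (r : ℝ) : ℝ :=
  (4 * Real.pi * r) ^ (-(n : ℝ) / 2) *
    ∫ x in S, Real.exp (-‖x - x₀‖ ^ 2 / (4 * r)) ∂(μH[(n : ℝ)])

theorem stmt_0 (n : ℕ) (hn : 1 ≤ n) (S : Set (EuclideanSpace ℝ (Fin (n+1))))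
    (hne : S.Nonempty) (hcpt : IsCompact S)
    (hpos : 0 < μH[(n : ℝ)] S) (hfin : μH[(n : ℝ)] S < ⊤)
    (r : ℝ) (hr : 0 < r) :
    ∃ x₀ ∈ convexHull ℝ S,
      (∀ y, gaussianF n S y r ≤ gaussianF n S x₀ r) ∧
      gaussianF n S x₀ r = ⨆ y, gaussianF n S y r := by
  classical
  set μ : Measure (EuclideanSpace ℝ (Fin (n+1))) := (μH[(n : ℝ)]).restrict S with hμ
  haveI : IsFiniteMeasure μ := ⟨by rwa [hμ, Measure.restrict_apply_univ]⟩
  set c : ℝ := (4 * Real.pi * r) ^ (-(n : ℝ) / 2) with hc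
  have hcpos : 0 ≤ c := Real.rpow_nonneg (by positivity) _
  set g : EuclideanSpace ℝ (Fin (n+1)) → ℝ :=
    fun y => ∫ x, Real.exp (-‖x - y‖ ^ 2 / (4 * r)) ∂μ with hg
  have hfg : ∀ y, gaussianF n S y r = c * g y := fun y => rfl
  have hexp_cont : ∀ y : EuclideanSpace ℝ (Fin (n+1)),
      Continuous (fun x : EuclideanSpace ℝ (Fin (n+1)) =>
        Real.exp (-‖x - y‖ ^ 2 / (4 * r))) := by
    intro y
    exact Real.continuous_exp.comp (by fun_prop)
  have hbd : ∀ (y x : EuclideanSpace ℝ (Fin (n+1))),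
      ‖Real.exp (-‖x - y‖ ^ 2 / (4 * r))‖ ≤ 1 := by
    intro y x
    rw [Real.norm_eq_abs, abs_of_pos (Real.exp_pos _)]
    apply Real.exp_le_one_iff.mpr
    apply div_nonpos_of_nonpos_of_nonneg (neg_nonpos.mpr (by positivity)) (by linarith)
  have hInt : ∀ y, Integrable (fun x => Real.exp (-‖x - y‖ ^ 2 / (4 * r))) μ := by
    intro y
    refine (integrable_const (1 : ℝ)).mono' ((hexp_cont y).aestronglyMeasurable) ?_
    filter_upwards with x using hbd y x
  have hgcont : Continuous g := by
    apply continuous_of_dominated (bound := fun _ => (1 : ℝ))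
    · exact fun y => (hexp_cont y).aestronglyMeasurable
    · intro y; filter_upwards with x using hbd y x
    · exact integrable_const 1
    · filter_upwards with x
      exact Real.continuous_exp.comp (by fun_prop)
  set K := convexHull ℝ S with hK
  have hKc : IsCompact K := isCompact_convexHull_aux hcpt hne
  have hKne : K.Nonempty := hne.mono (subset_convexHull ℝ S)
  have hKconv : Convex ℝ K := convex_convexHull ℝ S
  obtain ⟨x₀, hx₀K, hmax⟩ := hKc.exists_isMaxOn hKne hgcont.continuousOn
  have hglob : ∀ y, g y ≤ g x₀ := by
    intro y
    obtain ⟨v, hvK, hveq⟩ := exists_norm_eq_iInf_of_complete_convex hKne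
      hKc.isClosed.isComplete hKconv y
    have hproj := (norm_eq_iInf_iff_real_inner_le_zero hKconv hvK).mp hveq
    have key : ∀ x ∈ K, ‖x - v‖ ^ 2 ≤ ‖x - y‖ ^ 2 := by
      intro x hx
      have hi := hproj x hx
      have h1 : x - y = (x - v) - (y - v) := by abel
      have h2 := @norm_sub_sq_real (EuclideanSpace ℝ (Fin (n+1))) _ _ (x - v) (y - v)
      have h3 : (inner ℝ (x - v) (y - v) : ℝ) = inner ℝ (y - v) (x - v) := real_inner_comm _ _
      rw [h1]
      nlinarith [sq_nonneg ‖y - v‖]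
    have hgy : g y ≤ g v := by
      apply integral_mono_ae (hInt y) (hInt v)
      filter_upwards [ae_restrict_mem hcpt.isClosed.measurableSet] with x hx
      have h4 : (0:ℝ) < 4 * r := by linarith
      exact Real.exp_le_exp.mpr ((div_le_div_iff_of_pos_right h4).mpr
        (neg_le_neg (key x (subset_convexHull ℝ S hx))))
    exact hgy.trans (hmax hvK)
  have hfglob : ∀ y, gaussianF n S y r ≤ gaussianF n S x₀ r := by
    intro y; rw [hfg, hfg]; exact mul_le_mul_of_nonneg_left (hglob y) hcpos
  refine ⟨x₀, hx₀K, hfglob, ?_⟩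
  apply le_antisymm
  · exact le_ciSup ⟨gaussianF n S x₀ r, by rintro _ ⟨y, rfl⟩; exact hfglob y⟩ x₀
  · exact ciSup_le hfglob
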